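/- Let w = (u, v) be a pair of non-zero polynomials u(Y), v(Y) ∈ ℂ[Y] and let n = max{deg u, deg v}. Then for every y ∈ ℂ, max{|u(y)|, |v(y)|} ≥ 2^{-n} · min{ max{|u(0)|,|v(0)|}, inf_{η: u(η)=0} |v(η)|, inf_{η: v(η)=0} |u(η)| }. -/

import Mathlib

private lemma norm_mprod (m : Multiset ℂ) : ‖m.prod‖ = (m.map (fun z => ‖z‖)).prod := by
  induction m using Multiset.induction_on with
  | empty => simp
  | cons a s ih => simp [norm_mul, ih]

private lemma prod_map_le_aux {s : Multiset ℂ} {f g : ℂ → ℝ} (h0 : ∀ x ∈ s, 0 ≤ f x)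
    (h : ∀ x ∈ s, f x ≤ g x) : (s.map f).prod ≤ (s.map g).prod := by
  induction s using Multiset.induction_on with
  | empty => simp
  | cons a s ih =>
    simp only [Multiset.map_cons, Multiset.prod_cons]
    have hf : ∀ x ∈ s, 0 ≤ f x := fun x hx => h0 x (Multiset.mem_cons_of_mem hx)
    have hfs : (0:ℝ) ≤ (s.map f).prod :=
      Multiset.prod_nonneg (by
        intro x hx
        obtain ⟨a, ha, rfl⟩ := Multiset.mem_map.mp hx
        exact hf a ha)
    exact mul_le_mul (h a (Multiset.mem_cons_self a s))
      (ih hf (fun x hx => h x (Multiset.mem_cons_of_mem hx))) hfs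
      (le_trans (h0 a (Multiset.mem_cons_self a s)) (h a (Multiset.mem_cons_self a s)))

private lemma key_eval (p : Polynomial ℂ) (x : ℂ) :
    ‖p.eval x‖ = ‖p.leadingCoeff‖ * (p.roots.map fun β => ‖x - β‖).prod := by
  by_cases hp : p = 0
  · simp [hp]
  conv_lhs => rw [← Polynomial.C_leadingCoeff_mul_prod_multiset_X_sub_C (IsAlgClosed.card_roots_eq_natDegree (p := p))]
  rw [Polynomial.eval_mul, Polynomial.eval_multiset_prod, norm_mul, norm_mprod]
  simp [Multiset.map_map, Function.comp]

private lemma key (p : Polynomial ℂ) (y α : ℂ)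
    (h : ∀ β ∈ p.roots, ‖y - α‖ ≤ ‖y - β‖) :
    ‖p.eval α‖ ≤ 2 ^ p.natDegree * ‖p.eval y‖ := by
  by_cases hp : p = 0
  · simp [hp]
  have hcard : p.roots.card = p.natDegree :=
    IsAlgClosed.card_roots_eq_natDegree (p := p)
  rw [key_eval p α, key_eval p y]
  have h1 : (p.roots.map fun β => ‖α - β‖).prod
      ≤ (p.roots.map fun β => 2 * ‖y - β‖).prod := by
    apply prod_map_le_aux
    · intro x _; positivity
    · intro β hβ
      calc ‖α - β‖ ≤ ‖α - y‖ + ‖y - β‖ := norm_sub_le_norm_sub_add_norm_sub α y β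
        _ ≤ ‖y - β‖ + ‖y - β‖ := by
            have := h β hβ
            rw [norm_sub_rev α y]
            linarith
        _ = 2 * ‖y - β‖ := by ring
  have h2 : (p.roots.map fun β => 2 * ‖y - β‖).prod
      = 2 ^ p.natDegree * (p.roots.map fun β => ‖y - β‖).prod := by
    rw [← hcard, Multiset.prod_map_mul]
    congr 1
    simp
  calc ‖p.leadingCoeff‖ * (p.roots.map fun β => ‖α - β‖).prod
      ≤ ‖p.leadingCoeff‖ * (2 ^ p.natDegree * (p.roots.map fun β => ‖y - β‖).prod) := by
        rw [← h2]; exact mul_le_mul_of_nonneg_left h1 (norm_nonneg _)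
    _ = 2 ^ p.natDegree * (‖p.leadingCoeff‖ * (p.roots.map fun β => ‖y - β‖).prod) := by ring

/-- Płoski's "lemma of the norm of a polynomial mapping" (Lemma 5.6):
for a pair `w = (u,v)` of non-zero one-variable complex polynomials and
`n = max (deg u) (deg v)`, for every `y`,
`max |u(y)| |v(y)| ≥ 2⁻ⁿ · min { max |u(0)| |v(0)|, inf_{u(η)=0} |v(η)|, inf_{v(η)=0} |u(η)| }`.
The minimum is expressed by quantifying over lower bounds `M` of the three quantities
(with the convention that an infimum over an empty zero set is `+∞`). -/
theorem stmt0 (u v : Polynomial ℂ) (hu : u ≠ 0) (hv : v ≠ 0)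
    (n : ℕ) (hn : n = max u.natDegree v.natDegree) (y : ℂ) (M : ℝ)
    (hM0 : M ≤ max ‖u.eval 0‖ ‖v.eval 0‖)
    (hMu : ∀ η : ℂ, u.eval η = 0 → M ≤ ‖v.eval η‖)
    (hMv : ∀ η : ℂ, v.eval η = 0 → M ≤ ‖u.eval η‖) :
    ((2 : ℝ) ^ n)⁻¹ * M ≤ max ‖u.eval y‖ ‖v.eval y‖ := by
  have h2n : (0:ℝ) < 2 ^ n := by positivity
  have hone : (1:ℝ) ≤ 2 ^ n := one_le_pow₀ one_le_two
  rcases le_or_gt M 0 with hM | hM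
  · have : ((2:ℝ)^n)⁻¹ * M ≤ 0 := mul_nonpos_of_nonneg_of_nonpos (by positivity) hM
    exact this.trans (le_max_of_le_left (norm_nonneg _))
  suffices hs : M ≤ 2 ^ n * max ‖u.eval y‖ ‖v.eval y‖ by
    rw [inv_mul_le_iff₀ h2n]; exact hs
  have hmax0 : (0:ℝ) ≤ max ‖u.eval y‖ ‖v.eval y‖ := le_max_of_le_left (norm_nonneg _)
  by_cases hroots : u.roots + v.roots = 0
  · have hcards : Multiset.card u.roots + Multiset.card v.roots = 0 := by
      simpa using congrArg Multiset.card hroots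
    have hur : u.roots = 0 := Multiset.card_eq_zero.mp (by omega)
    have hvr : v.roots = 0 := Multiset.card_eq_zero.mp (by omega)
    have hud : u.natDegree = 0 := by
      rw [← IsAlgClosed.card_roots_eq_natDegree (p := u), hur]; rfl
    have hvd : v.natDegree = 0 := by
      rw [← IsAlgClosed.card_roots_eq_natDegree (p := v), hvr]; rfl
    obtain ⟨a, ha⟩ := Polynomial.natDegree_eq_zero.mp hud
    obtain ⟨b, hb⟩ := Polynomial.natDegree_eq_zero.mp hvd
    have : max ‖u.eval y‖ ‖v.eval y‖ = max ‖u.eval 0‖ ‖v.eval 0‖ := by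
      rw [← ha, ← hb]; simp
    rw [this]
    calc M ≤ max ‖u.eval 0‖ ‖v.eval 0‖ := hM0
      _ = 1 * max ‖u.eval 0‖ ‖v.eval 0‖ := (one_mul _).symm
      _ ≤ 2 ^ n * max ‖u.eval 0‖ ‖v.eval 0‖ := by
          apply mul_le_mul_of_nonneg_right hone
          rw [← this]; exact hmax0
  · obtain ⟨γ, hγmem, hγmin⟩ := (u.roots + v.roots).toFinset.exists_min_image
      (fun γ => ‖y - γ‖) (by rw [Multiset.toFinset_nonempty]; exact hroots)
    have hγmin' : ∀ β ∈ u.roots + v.roots, ‖y - γ‖ ≤ ‖y - β‖ := fun β hβ =>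
      hγmin β (Multiset.mem_toFinset.mpr hβ)
    rw [Multiset.mem_toFinset, Multiset.mem_add] at hγmem
    rcases hγmem with hγu | hγv
    · have h1 : M ≤ ‖v.eval γ‖ := hMu γ ((Polynomial.mem_roots hu).mp hγu)
      have h2 : ‖v.eval γ‖ ≤ 2 ^ v.natDegree * ‖v.eval y‖ :=
        key v y γ (fun β hβ => hγmin' β (Multiset.mem_add.mpr (Or.inr hβ)))
      calc M ≤ 2 ^ v.natDegree * ‖v.eval y‖ := h1.trans h2
        _ ≤ 2 ^ n * max ‖u.eval y‖ ‖v.eval y‖ :=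
            mul_le_mul (pow_le_pow_right₀ one_le_two (hn ▸ le_max_right _ _))
              (le_max_right _ _) (norm_nonneg _) (le_of_lt h2n)
    · have h1 : M ≤ ‖u.eval γ‖ := hMv γ ((Polynomial.mem_roots hv).mp hγv)
      have h2 : ‖u.eval γ‖ ≤ 2 ^ u.natDegree * ‖u.eval y‖ :=
        key u y γ (fun β hβ => hγmin' β (Multiset.mem_add.mpr (Or.inl hβ)))
      calc M ≤ 2 ^ u.natDegree * ‖u.eval y‖ := h1.trans h2
        _ ≤ 2 ^ n * max ‖u.eval y‖ ‖v.eval y‖ :=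
            mul_le_mul (pow_le_pow_right₀ one_le_two (hn ▸ le_max_left _ _))
              (le_max_left _ _) (norm_nonneg _) (le_of_lt h2n)
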